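/- Let U₁, U₂ be independent uniformly distributed random points on the unit sphere S^{d−1} (d ≥ 2), and let C_N(x) be the geodesic cap centered at x with normalized surface measure 1/N, where N ≥ 2. Then P(C_N(U₁) ∩ C_N(U₂) ≠ ∅) ≤ 2^{d−1}/N. -/

import Mathlib

open Real MeasureTheory ProbabilityTheory InnerProductSpace

/-- The geodesic cap of radius `r` centered at `x` on the unit sphere. -/
noncomputable def geodesicCap {d : ℕ} (r : ℝ)
    (x : Metric.sphere (0 : EuclideanSpace ℝ (Fin d)) 1) :
    Set (Metric.sphere (0 : EuclideanSpace ℝ (Fin d)) 1) :=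
  {y | Real.arccos ⟪(x : EuclideanSpace ℝ (Fin d)), (y : EuclideanSpace ℝ (Fin d))⟫_ℝ ≤ r}

/-- The map induced on the unit sphere by a linear isometry of the ambient space. -/
noncomputable def sphereMap {d : ℕ} (f : EuclideanSpace ℝ (Fin d) ≃ₗᵢ[ℝ] EuclideanSpace ℝ (Fin d))
    (y : Metric.sphere (0 : EuclideanSpace ℝ (Fin d)) 1) :
    Metric.sphere (0 : EuclideanSpace ℝ (Fin d)) 1 :=
  ⟨f y, by
    have hy : ‖(y : EuclideanSpace ℝ (Fin d))‖ = 1 :=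
      mem_sphere_zero_iff_norm.mp y.2
    simp [mem_sphere_zero_iff_norm, f.norm_map, hy]⟩

section Aux


lemma arccos_le_of_cos_le {x t : ℝ} (h1 : -1 ≤ x) (h2 : x ≤ 1) (ht : 0 ≤ t)
    (h : Real.cos t ≤ x) : Real.arccos x ≤ t := by
  by_contra hc
  push_neg at hc
  have h3 : Real.cos (Real.arccos x) < Real.cos t :=
    Real.cos_lt_cos_of_nonneg_of_le_pi ht (Real.arccos_le_pi x) hc
  rw [Real.cos_arccos h1 h2] at h3
  linarith

variable {F : Type*} [NormedAddCommGroup F] [InnerProductSpace ℝ F]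

lemma inner_mem_Icc {x y : F} (hx : ‖x‖ = 1) (hy : ‖y‖ = 1) :
    ⟪x, y⟫_ℝ ∈ Set.Icc (-1 : ℝ) 1 := by
  have := abs_real_inner_le_norm x y
  rw [hx, hy] at this
  constructor <;> [linarith [neg_abs_le (⟪x, y⟫_ℝ)]; linarith [le_abs_self (⟪x, y⟫_ℝ)]]

/-- spherical triangle inequality -/
lemma arccos_inner_triangle {x y z : F} (hx : ‖x‖ = 1) (hy : ‖y‖ = 1) (hz : ‖z‖ = 1) :
    Real.arccos ⟪x, y⟫_ℝ ≤ Real.arccos ⟪x, z⟫_ℝ + Real.arccos ⟪z, y⟫_ℝ := by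
  obtain ⟨ha1, ha2⟩ := inner_mem_Icc hx hz
  obtain ⟨hb1, hb2⟩ := inner_mem_Icc hz hy
  obtain ⟨hc1, hc2⟩ := inner_mem_Icc hx hy
  set a : ℝ := ⟪x, z⟫_ℝ with ha
  set b : ℝ := ⟪z, y⟫_ℝ with hb
  have key : Real.cos (Real.arccos a + Real.arccos b) ≤ ⟪x, y⟫_ℝ := by
    rw [Real.cos_add, Real.cos_arccos ha1 ha2, Real.cos_arccos hb1 hb2,
      Real.sin_arccos, Real.sin_arccos]
    have hxz : ‖x - a • z‖ = Real.sqrt (1 - a ^ 2) := by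
      rw [← Real.sqrt_sq (norm_nonneg (x - a • z))]
      congr 1
      rw [norm_sub_sq_real, real_inner_smul_right, norm_smul, hx, hz, ← ha]
      simp [norm_eq_abs, mul_pow, sq_abs]
      ring
    have hyz : ‖y - b • z‖ = Real.sqrt (1 - b ^ 2) := by
      rw [← Real.sqrt_sq (norm_nonneg (y - b • z))]
      congr 1
      have hcm : ⟪y, z⟫_ℝ = b := real_inner_comm z y
      rw [norm_sub_sq_real, real_inner_smul_right, norm_smul, hy, hz, hcm]
      simp [norm_eq_abs, mul_pow, sq_abs]
      ring
    have expand : ⟪x - a • z, y - b • z⟫_ℝ = ⟪x, y⟫_ℝ - a * b := by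
      rw [inner_sub_left, inner_sub_right, inner_sub_right, real_inner_smul_left,
        real_inner_smul_left, real_inner_smul_right, real_inner_smul_right,
        real_inner_self_eq_norm_sq, hz]
      simp only [← ha, ← hb]
      ring
    have cs : -(‖x - a • z‖ * ‖y - b • z‖) ≤ ⟪x - a • z, y - b • z⟫_ℝ := by
      have := abs_real_inner_le_norm (x - a • z) (y - b • z)
      linarith [neg_abs_le (⟪x - a • z, y - b • z⟫_ℝ)]
    rw [hxz, hyz, expand] at cs
    linarith
  exact arccos_le_of_cos_le hc1 hc2
    (add_nonneg (Real.arccos_nonneg _) (Real.arccos_nonneg _)) key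

end Aux

namespace CapProof

variable {d : ℕ} {k : ℕ}

local notation "E" => EuclideanSpace ℝ (Fin (k+2))
local notation "E'" => EuclideanSpace ℝ (Fin (k+1))

variable {d : ℕ}

abbrev Sph (d : ℕ) := Metric.sphere (0 : EuclideanSpace ℝ (Fin d)) 1

lemma sphere_norm_one (x : Sph d) : ‖(x : EuclideanSpace ℝ (Fin d))‖ = 1 :=
  mem_sphere_zero_iff_norm.mp x.2

lemma measurableSet_cap (s : ℝ) (x : Sph d) : MeasurableSet (geodesicCap s x) := by
  have hcont : Continuous fun y : Sph d =>
      Real.arccos ⟪(x : EuclideanSpace ℝ (Fin d)), (y : EuclideanSpace ℝ (Fin d))⟫_ℝ :=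
    Real.continuous_arccos.comp (continuous_const.inner continuous_subtype_val)
  exact measurableSet_le hcont.measurable measurable_const

lemma measurable_sphereMap (f : EuclideanSpace ℝ (Fin d) ≃ₗᵢ[ℝ] EuclideanSpace ℝ (Fin d)) :
    Measurable (sphereMap f) := by
  have : Continuous (sphereMap f) := by
    apply Continuous.subtype_mk
    exact f.continuous.comp continuous_subtype_val
  exact this.measurable

lemma sphereMap_preimage_cap (f : EuclideanSpace ℝ (Fin d) ≃ₗᵢ[ℝ] EuclideanSpace ℝ (Fin d))
    (s : ℝ) (x : Sph d) :
    sphereMap f ⁻¹' geodesicCap s x = geodesicCap s (sphereMap f.symm x) := by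
  ext z
  simp only [geodesicCap, Set.mem_preimage, Set.mem_setOf_eq, sphereMap]
  have : ⟪(x : EuclideanSpace ℝ (Fin d)), f z⟫_ℝ
      = ⟪f.symm (x : EuclideanSpace ℝ (Fin d)), (z : EuclideanSpace ℝ (Fin d))⟫_ℝ := by
    conv_lhs => rw [← f.apply_symm_apply (x : EuclideanSpace ℝ (Fin d))]
    exact f.inner_map_map _ _
  rw [this]

lemma exists_sphereMap_eq (x y : Sph d) :
    ∃ f : EuclideanSpace ℝ (Fin d) ≃ₗᵢ[ℝ] EuclideanSpace ℝ (Fin d), sphereMap f x = y := by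
  refine ⟨Submodule.reflection (Submodule.span ℝ {(x : EuclideanSpace ℝ (Fin d)) - y})ᗮ, ?_⟩
  apply Subtype.ext
  exact Submodule.reflection_sub (by rw [sphere_norm_one, sphere_norm_one])

/-- For an invariant measure, the measure of a cap does not depend on its center. -/
lemma cap_const (μ : Measure (Sph d))
    (hinv : ∀ f : EuclideanSpace ℝ (Fin d) ≃ₗᵢ[ℝ] EuclideanSpace ℝ (Fin d),
      Measure.map (sphereMap f) μ = μ) (s : ℝ) (x y : Sph d) :
    μ (geodesicCap s x) = μ (geodesicCap s y) := by
  obtain ⟨f, hf⟩ := exists_sphereMap_eq x y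
  calc μ (geodesicCap s x) = (Measure.map (sphereMap f.symm) μ) (geodesicCap s x) := by
        rw [hinv f.symm]
    _ = μ (sphereMap f.symm ⁻¹' geodesicCap s x) :=
        Measure.map_apply (measurable_sphereMap _) (measurableSet_cap _ _)
    _ = μ (geodesicCap s (sphereMap f.symm.symm x)) := by rw [sphereMap_preimage_cap]
    _ = μ (geodesicCap s y) := by
        congr 1
        rw [LinearIsometryEquiv.symm_symm, hf]

lemma measurableSet_capRel (s : ℝ) :
    MeasurableSet {p : Sph d × Sph d | p.2 ∈ geodesicCap s p.1} := by
  have hcont : Continuous fun p : Sph d × Sph d =>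
      Real.arccos ⟪(p.1 : EuclideanSpace ℝ (Fin d)), (p.2 : EuclideanSpace ℝ (Fin d))⟫_ℝ := by
    apply Real.continuous_arccos.comp
    exact (continuous_subtype_val.comp continuous_fst).inner
      (continuous_subtype_val.comp continuous_snd)
  exact measurableSet_le hcont.measurable measurable_const

/-- Any two invariant probability measures assign the same measure to caps. -/
lemma cap_unique (μ ν : Measure (Sph d)) [IsProbabilityMeasure μ] [IsProbabilityMeasure ν]
    (hμ : ∀ f : EuclideanSpace ℝ (Fin d) ≃ₗᵢ[ℝ] EuclideanSpace ℝ (Fin d),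
      Measure.map (sphereMap f) μ = μ)
    (hν : ∀ f : EuclideanSpace ℝ (Fin d) ≃ₗᵢ[ℝ] EuclideanSpace ℝ (Fin d),
      Measure.map (sphereMap f) ν = ν)
    (s : ℝ) (x : Sph d) :
    μ (geodesicCap s x) = ν (geodesicCap s x) := by
  set T : Set (Sph d × Sph d) := {p | p.2 ∈ geodesicCap s p.1} with hT
  have hTm : MeasurableSet T := measurableSet_capRel s
  have h1 : (μ.prod ν) T = ν (geodesicCap s x) := by
    rw [Measure.prod_apply hTm]
    have : ∀ z : Sph d, ν (Prod.mk z ⁻¹' T) = ν (geodesicCap s x) := fun z =>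
      cap_const ν hν s z x
    rw [lintegral_congr this, lintegral_const, measure_univ, mul_one]
  have h2 : (μ.prod ν) T = μ (geodesicCap s x) := by
    have hswap : (μ.prod ν) T = (ν.prod μ) (Prod.swap ⁻¹' T) := by
      rw [← Measure.prod_swap]
      exact Measure.map_apply measurable_swap hTm
    have hsw : Prod.swap ⁻¹' T = {p : Sph d × Sph d | p.2 ∈ geodesicCap s p.1} := by
      ext p
      simp only [hT, Set.mem_preimage, Set.mem_setOf_eq, Prod.snd_swap, Prod.fst_swap,
        geodesicCap]
      rw [real_inner_comm]
    rw [hswap, hsw, Measure.prod_apply (measurableSet_capRel s)]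
    have : ∀ z : Sph d, μ (Prod.mk z ⁻¹' {p : Sph d × Sph d | p.2 ∈ geodesicCap s p.1})
        = μ (geodesicCap s x) := fun z => cap_const μ hμ s z x
    rw [lintegral_congr this, lintegral_const, measure_univ, mul_one]
  rw [← h2, h1]



noncomputable def e₀ : EuclideanSpace ℝ (Fin (k+2)) := EuclideanSpace.single 0 1

lemma norm_e₀ : ‖(e₀ : E)‖ = 1 := by
  rw [e₀, EuclideanSpace.norm_single, norm_one]

open scoped Classical in
noncomputable def nmap (k : ℕ) (v : EuclideanSpace ℝ (Fin (k+2))) :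
    Metric.sphere (0 : EuclideanSpace ℝ (Fin (k+2))) 1 :=
  ⟨if v = 0 then e₀ else ‖v‖⁻¹ • v, by
    rw [mem_sphere_zero_iff_norm]
    split_ifs with h
    · exact norm_e₀
    · rw [norm_smul, norm_inv, norm_norm, inv_mul_cancel₀ (norm_ne_zero_iff.mpr h)]⟩

open scoped Classical in
lemma measurable_nmap : Measurable (nmap k) := by
  apply Measurable.subtype_mk
  apply Measurable.ite
  · exact MeasurableSet.singleton 0
  · exact measurable_const
  · exact (measurable_norm.inv).smul measurable_id


noncomputable def ballMeasure (k : ℕ) : Measure (EuclideanSpace ℝ (Fin (k+2))) :=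
  volume.restrict (Metric.closedBall 0 1)

noncomputable def sigma0 (k : ℕ) :
    Measure (Metric.sphere (0 : EuclideanSpace ℝ (Fin (k+2))) 1) :=
  (volume (Metric.closedBall (0 : EuclideanSpace ℝ (Fin (k+2))) 1))⁻¹ •
    Measure.map (nmap k) (ballMeasure k)

lemma ballVol_ne_zero : volume (Metric.closedBall (0 : E) 1) ≠ 0 :=
  (Metric.measure_closedBall_pos volume (0 : E) one_pos).ne'

lemma ballVol_ne_top : volume (Metric.closedBall (0 : E) 1) ≠ ⊤ :=
  (measure_closedBall_lt_top).ne

instance : IsProbabilityMeasure (sigma0 k) := by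
  constructor
  rw [sigma0, Measure.smul_apply, Measure.map_apply measurable_nmap MeasurableSet.univ,
    Set.preimage_univ, ballMeasure, Measure.restrict_apply MeasurableSet.univ,
    Set.univ_inter, smul_eq_mul, ENNReal.inv_mul_cancel ballVol_ne_zero ballVol_ne_top]

lemma sigma0_invariant (f : EuclideanSpace ℝ (Fin (k+2)) ≃ₗᵢ[ℝ] EuclideanSpace ℝ (Fin (k+2))) :
    Measure.map (sphereMap f) (sigma0 k) = sigma0 k := by
  rw [sigma0, Measure.map_smul]
  congr 1
  rw [Measure.map_map (measurable_sphereMap f) measurable_nmap]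
  have hae : (sphereMap f ∘ nmap k) =ᵐ[ballMeasure k] (nmap k ∘ f) := by
    have h0 : ballMeasure k {(0 : E)} = 0 := by
      apply le_antisymm _ (zero_le)
      calc ballMeasure k {(0:E)} ≤ volume {(0:E)} := Measure.restrict_le_self _
        _ = 0 := measure_singleton 0
    filter_upwards [measure_eq_zero_iff_ae_notMem.mp h0] with v hv
    have hv0 : v ≠ 0 := fun h => hv (by simp [h])
    have hfv0 : f v ≠ 0 := fun h => hv0 (f.map_eq_zero_iff.mp h)
    apply Subtype.ext
    show (sphereMap f (nmap k v) : E) = (nmap k (f v) : E)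
    simp only [sphereMap, nmap, if_neg hv0, if_neg hfv0]
    rw [f.map_smul, f.norm_map]
  rw [Measure.map_congr hae, ← Measure.map_map measurable_nmap f.continuous.measurable]
  congr 1
  rw [ballMeasure]
  have hB : MeasurableSet (Metric.closedBall (0 : E) 1) := Metric.isClosed_closedBall.measurableSet
  have hpre : f ⁻¹' (Metric.closedBall (0 : E) 1) = Metric.closedBall 0 1 := by
    ext v
    simp [Metric.mem_closedBall, dist_zero_right, f.norm_map]
  calc Measure.map (⇑f) (volume.restrict (Metric.closedBall 0 1))
      = Measure.map (⇑f) (volume.restrict (f ⁻¹' Metric.closedBall 0 1)) := by rw [hpre]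
    _ = (Measure.map (⇑f) volume).restrict (Metric.closedBall 0 1) :=
        (Measure.restrict_map f.continuous.measurable hB).symm
    _ = volume.restrict (Metric.closedBall 0 1) := by
        rw [f.measurePreserving.map_eq]



/-- The solid cone-cap in the unit ball. -/
def capCone (k : ℕ) (s : ℝ) : Set (EuclideanSpace ℝ (Fin (k+2))) :=
  {v | ‖v‖ ≤ 1 ∧ ‖v‖ * Real.cos s ≤ v 0}

def sliceMap (k : ℕ) (v : EuclideanSpace ℝ (Fin (k+2))) : ℝ × EuclideanSpace ℝ (Fin (k+1)) :=
  (v 0, WithLp.toLp 2 (fun j : Fin (k+1) => v j.succ))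

lemma sliceMap_mp : MeasurePreserving (sliceMap k) volume volume := by
  have m1 : MeasurePreserving (MeasurableEquiv.toLp 2 (Fin (k+2) → ℝ)).symm volume volume :=
    EuclideanSpace.volume_preserving_symm_measurableEquiv_toLp _
  have m2 : MeasurePreserving (MeasurableEquiv.piFinSuccAbove (fun _ : Fin (k+2) => ℝ) 0)
      (volume : Measure (Fin (k+2) → ℝ))
      ((volume : Measure ℝ).prod (volume : Measure (Fin (k+1) → ℝ))) := by
    have := measurePreserving_piFinSuccAbove (fun _ : Fin (k+2) => (volume : Measure ℝ)) 0
    simpa [MeasureTheory.volume_pi] using this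
  have m3 : MeasurePreserving
      (Prod.map (id : ℝ → ℝ) (MeasurableEquiv.toLp 2 (Fin (k+1) → ℝ)).symm.symm)
      ((volume : Measure ℝ).prod (volume : Measure (Fin (k+1) → ℝ)))
      ((volume : Measure ℝ).prod (volume : Measure E')) :=
    (MeasurePreserving.id _).prod (EuclideanSpace.volume_preserving_symm_measurableEquiv_toLp _).symm
  have hcomp := (m3.comp m2).comp m1
  have heq : ((Prod.map (id : ℝ → ℝ) ⇑(MeasurableEquiv.toLp 2 (Fin (k+1) → ℝ)).symm.symm ∘
      ⇑(MeasurableEquiv.piFinSuccAbove (fun _ : Fin (k+2) => ℝ) 0)) ∘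
      ⇑(MeasurableEquiv.toLp 2 (Fin (k+2) → ℝ)).symm) = sliceMap k := by
    funext v
    show (Prod.map _ _) ((MeasurableEquiv.piFinSuccAbove (fun _ : Fin (k+2) => ℝ) 0)
      ((MeasurableEquiv.toLp 2 (Fin (k+2) → ℝ)).symm v)) = sliceMap k v
    simp only [MeasurableEquiv.piFinSuccAbove, MeasurableEquiv.coe_mk,
      Prod.map]
    apply Prod.ext
    · rfl
    · ext j
      show v ((0 : Fin (k+2)).succAbove j) = v j.succ
      rw [Fin.zero_succAbove]
  rw [heq] at hcomp
  rw [← MeasureTheory.Measure.volume_eq_prod] at hcomp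
  exact hcomp

lemma euclid_norm_sq : ∀ (n : ℕ) (w : EuclideanSpace ℝ (Fin n)), ‖w‖^2 = ∑ j, (w j)^2 := by
  intro n w
  rw [EuclideanSpace.norm_eq, Real.sq_sqrt (by positivity)]
  simp [Real.norm_eq_abs, sq_abs]

lemma norm_split (v : E) :
    ((sliceMap k v).1)^2 + ‖(sliceMap k v).2‖^2 = ‖v‖^2 := by
  rw [euclid_norm_sq (k+2) v, euclid_norm_sq (k+1) ((sliceMap k v).2)]
  rw [show (∑ x : Fin (k+2), (v x)^2) = (v 0)^2 + ∑ x : Fin (k+1), (v x.succ)^2 from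
    Fin.sum_univ_succ _]
  simp [sliceMap]

/-- Flat description of `capCone` in slice coordinates. -/
def sliceSet (k : ℕ) (s : ℝ) : Set (ℝ × EuclideanSpace ℝ (Fin (k+1))) :=
  {p | p.1^2 + ‖p.2‖^2 ≤ 1 ∧ Real.sqrt (p.1^2 + ‖p.2‖^2) * Real.cos s ≤ p.1}

lemma sliceSet_measurable (s : ℝ) : MeasurableSet (sliceSet k s) := by
  have hc : Continuous fun p : ℝ × E' => p.1^2 + ‖p.2‖^2 := by fun_prop
  apply MeasurableSet.inter
  · exact measurableSet_le hc.measurable measurable_const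
  · exact measurableSet_le ((Real.continuous_sqrt.comp hc).mul continuous_const).measurable
      continuous_fst.measurable

lemma preimage_sliceSet (s : ℝ) : sliceMap k ⁻¹' (sliceSet k s) = capCone k s := by
  ext v
  have hns := norm_split v
  simp only [sliceSet, capCone, Set.mem_preimage, Set.mem_setOf_eq, hns]
  rw [Real.sqrt_sq (norm_nonneg v)]
  have h1 : ‖v‖^2 ≤ 1 ↔ ‖v‖ ≤ 1 := by
    constructor <;> intro h <;> nlinarith [norm_nonneg v]
  rw [h1]
  simp [sliceMap]

lemma capCone_measurable (s : ℝ) : MeasurableSet (capCone k s) := by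
  rw [← preimage_sliceSet]
  exact sliceMap_mp.measurable (sliceSet_measurable s)

lemma capCone_vol (s : ℝ) :
    volume (capCone k s) = ∫⁻ t : ℝ, volume {w : E' |
      t^2 + ‖w‖^2 ≤ 1 ∧ Real.sqrt (t^2 + ‖w‖^2) * Real.cos s ≤ t} := by
  rw [← preimage_sliceSet, sliceMap_mp.measure_preimage (sliceSet_measurable s).nullMeasurableSet,
    MeasureTheory.Measure.volume_eq_prod, Measure.prod_apply (sliceSet_measurable s)]
  rfl

lemma capCone_mono {s s' : ℝ} (h0 : 0 ≤ s) (h : s ≤ s') (hπ : s' ≤ π) :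
    capCone k s ⊆ capCone k s' := by
  intro v hv
  refine ⟨hv.1, le_trans ?_ hv.2⟩
  exact mul_le_mul_of_nonneg_left (Real.cos_le_cos_of_nonneg_of_le_pi h0 hπ h) (norm_nonneg v)

lemma abs_coord_le_norm (v : E) : |v 0| ≤ ‖v‖ := by
  have h := abs_real_inner_le_norm (EuclideanSpace.single (0 : Fin (k+2)) (1:ℝ)) v
  rw [EuclideanSpace.inner_single_left, EuclideanSpace.norm_single] at h
  simpa using h

lemma capCone_pi : capCone k π = Metric.closedBall (0 : E) 1 := by
  ext v
  simp only [capCone, Set.mem_setOf_eq, Metric.mem_closedBall, dist_zero_right, Real.cos_pi,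
    mul_neg_one]
  constructor
  · exact fun h => h.1
  · intro h
    refine ⟨h, ?_⟩
    have := abs_coord_le_norm v
    cases abs_le.mp this with
    | intro h1 h2 => linarith


lemma le_of_sq_le_sq {a b : ℝ} (ha : 0 ≤ a) (hb : 0 ≤ b) (h : a^2 ≤ b^2) : a ≤ b := by
  nlinarith

lemma slice_empty {s t : ℝ} (hcos : 0 ≤ Real.cos s) (ht : t ∉ Set.Icc (0:ℝ) 1) :
    {w : E' | t^2 + ‖w‖^2 ≤ 1 ∧ Real.sqrt (t^2 + ‖w‖^2) * Real.cos s ≤ t} = ∅ := by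
  rw [Set.eq_empty_iff_forall_notMem]
  rintro w ⟨h1, h2⟩
  rw [Set.mem_Icc, not_and_or] at ht
  rcases ht with ht | ht
  · push_neg at ht
    have : 0 ≤ Real.sqrt (t^2 + ‖w‖^2) * Real.cos s :=
      mul_nonneg (Real.sqrt_nonneg _) hcos
    linarith
  · push_neg at ht
    nlinarith [sq_nonneg ‖w‖, norm_nonneg w]

lemma slice_ball {s t : ℝ} (hs : s ∈ Set.Icc 0 (π/2)) (hc : 0 < Real.cos s)
    (ht : t ∈ Set.Icc (0:ℝ) 1) :
    {w : E' | t^2 + ‖w‖^2 ≤ 1 ∧ Real.sqrt (t^2 + ‖w‖^2) * Real.cos s ≤ t} =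
      Metric.closedBall 0 (min (Real.sqrt (1 - t^2)) (t * Real.sin s / Real.cos s)) := by
  have hsin : 0 ≤ Real.sin s :=
    Real.sin_nonneg_of_nonneg_of_le_pi hs.1 (le_trans hs.2 (by linarith [Real.pi_pos]))
  obtain ⟨ht0, ht1⟩ := ht
  have h1t : 0 ≤ 1 - t^2 := by nlinarith
  ext w
  have hw : 0 ≤ ‖w‖ := norm_nonneg w
  have hX : (0:ℝ) ≤ t^2 + ‖w‖^2 := by positivity
  simp only [Set.mem_setOf_eq, Metric.mem_closedBall, dist_zero_right, le_min_iff]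
  constructor
  · rintro ⟨h1, h2⟩
    constructor
    · apply le_of_sq_le_sq hw (Real.sqrt_nonneg _)
      rw [Real.sq_sqrt h1t]
      linarith
    · rw [le_div_iff₀ hc]
      have hXc : (t^2 + ‖w‖^2) * Real.cos s^2 ≤ t^2 := by
        nlinarith [Real.sq_sqrt hX, Real.sqrt_nonneg (t^2 + ‖w‖^2),
          mul_nonneg (Real.sqrt_nonneg (t^2 + ‖w‖^2)) hc.le]
      apply le_of_sq_le_sq (mul_nonneg hw hc.le) (mul_nonneg ht0 hsin)
      have hsc := Real.sin_sq_add_cos_sq s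
      nlinarith
  · intro ⟨hmin1, hmin2⟩
    have hw2 : ‖w‖^2 ≤ 1 - t^2 := by
      nlinarith [Real.sq_sqrt h1t, Real.sqrt_nonneg (1 - t^2)]
    have hwc : ‖w‖ * Real.cos s ≤ t * Real.sin s := by
      rw [← le_div_iff₀ hc]; exact hmin2
    refine ⟨by linarith, ?_⟩
    have hXc : (t^2 + ‖w‖^2) * Real.cos s^2 ≤ t^2 := by
      have hsc := Real.sin_sq_add_cos_sq s
      have hsq : (‖w‖ * Real.cos s)^2 ≤ (t * Real.sin s)^2 :=
        pow_le_pow_left₀ (mul_nonneg hw hc.le) hwc 2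
      nlinarith
    apply le_of_sq_le_sq (mul_nonneg (Real.sqrt_nonneg _) hc.le) ht0
    rw [mul_pow, Real.sq_sqrt hX]
    exact hXc

lemma slice_ball_pi_div_two {t : ℝ} (ht : t ∈ Set.Icc (0:ℝ) 1) :
    {w : E' | t^2 + ‖w‖^2 ≤ 1 ∧ Real.sqrt (t^2 + ‖w‖^2) * Real.cos (π/2) ≤ t} =
      Metric.closedBall 0 (Real.sqrt (1 - t^2)) := by
  obtain ⟨ht0, ht1⟩ := ht
  have h1t : 0 ≤ 1 - t^2 := by nlinarith
  ext w
  have hw : 0 ≤ ‖w‖ := norm_nonneg w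
  simp only [Set.mem_setOf_eq, Real.cos_pi_div_two, mul_zero, Metric.mem_closedBall,
    dist_zero_right]
  constructor
  · rintro ⟨h1, _⟩
    apply le_of_sq_le_sq hw (Real.sqrt_nonneg _)
    rw [Real.sq_sqrt h1t]
    linarith
  · intro h
    have hw2 : ‖w‖^2 ≤ 1 - t^2 := by
      nlinarith [Real.sq_sqrt h1t, Real.sqrt_nonneg (1 - t^2)]
    exact ⟨by linarith, ht0⟩

/-- Assembly: if all slices are balls of radius `g t`, the cone volume is the integral. -/
lemma capCone_vol_of_slices {s : ℝ} {g : ℝ → ℝ} (hg : Continuous g)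
    (hgnn : ∀ t ∈ Set.Icc (0:ℝ) 1, 0 ≤ g t)
    (hslice : ∀ t ∈ Set.Icc (0:ℝ) 1,
      {w : E' | t^2 + ‖w‖^2 ≤ 1 ∧ Real.sqrt (t^2 + ‖w‖^2) * Real.cos s ≤ t} =
        Metric.closedBall 0 (g t))
    (hempty : ∀ t ∉ Set.Icc (0:ℝ) 1,
      {w : E' | t^2 + ‖w‖^2 ≤ 1 ∧ Real.sqrt (t^2 + ‖w‖^2) * Real.cos s ≤ t} = ∅) :
    volume (capCone k s) =
      ENNReal.ofReal (∫ t in (0:ℝ)..1, (g t)^(k+1)) * volume (Metric.ball (0:E') 1) := by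
  rw [capCone_vol]
  have hvol : ∀ t : ℝ, volume {w : E' | t^2 + ‖w‖^2 ≤ 1 ∧
      Real.sqrt (t^2 + ‖w‖^2) * Real.cos s ≤ t} =
      (Set.Icc (0:ℝ) 1).indicator (fun t => ENNReal.ofReal ((g t)^(k+1))) t *
        volume (Metric.ball (0:E') 1) := by
    intro t
    by_cases ht : t ∈ Set.Icc (0:ℝ) 1
    · rw [hslice t ht, Set.indicator_of_mem ht,
        Measure.addHaar_closedBall volume 0 (hgnn t ht)]
      congr 2
      rw [finrank_euclideanSpace_fin]
    · rw [hempty t ht, Set.indicator_of_notMem ht, measure_empty, zero_mul]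
  simp_rw [hvol]
  rw [lintegral_mul_const _ (Measurable.indicator (f := fun t => ENNReal.ofReal (g t ^ (k+1)))
      (hg.pow _).measurable.ennreal_ofReal measurableSet_Icc),
    lintegral_indicator measurableSet_Icc]
  congr 1
  rw [← MeasureTheory.ofReal_integral_eq_lintegral_ofReal (f := fun t => g t ^ (k+1))
      ((hg.pow (k+1)).integrableOn_Icc : IntegrableOn (fun t => g t ^ (k+1)) _ _)
      ((ae_restrict_iff' measurableSet_Icc).2 (ae_of_all _ fun t ht => pow_nonneg (hgnn t ht) _))]
  congr 1
  rw [MeasureTheory.integral_Icc_eq_integral_Ioc,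
    ← intervalIntegral.integral_of_le zero_le_one]


noncomputable def Isin (k : ℕ) (s : ℝ) : ℝ := ∫ u in (0:ℝ)..s, Real.sin u ^ k

lemma integrable_sin_pow (m : ℕ) (a b : ℝ) :
    IntervalIntegrable (fun x => Real.sin x ^ m) volume a b :=
  (Real.continuous_sin.pow m).intervalIntegrable a b

lemma sin_identity (s : ℝ) :
    (k+1:ℝ) * Isin k s - (k+2) * (∫ x in (0:ℝ)..s, Real.sin x ^ (k+2))
      = Real.sin s ^ (k+1) * Real.cos s := by
  have hderiv : ∀ x ∈ Set.uIcc (0:ℝ) s, HasDerivAt (fun y => Real.sin y ^ (k+1) * Real.cos y)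
      ((k+1:ℝ) * Real.sin x ^ k - (k+2) * Real.sin x ^ (k+2)) x := by
    intro x _
    have h1 : HasDerivAt (fun y => Real.sin y ^ (k+1) * Real.cos y) ((↑(k + 1) : ℝ) *
        Real.sin x ^ (k + 1 - 1) * Real.cos x * Real.cos x + Real.sin x ^ (k + 1) * -Real.sin x) x :=
      ((Real.hasDerivAt_sin x).pow (k+1)).mul (Real.hasDerivAt_cos x)
    convert h1 using 1
    simp only [Nat.add_sub_cancel]
    push_cast
    linear_combination (-((k:ℝ)+1) * Real.sin x ^ k) * (Real.sin_sq_add_cos_sq x)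
  have hint : IntervalIntegrable
      (fun x => (k+1:ℝ) * Real.sin x ^ k - (k+2) * Real.sin x ^ (k+2)) volume 0 s := by
    apply IntervalIntegrable.sub
    · exact (integrable_sin_pow k 0 s).const_mul _
    · exact (integrable_sin_pow (k+2) 0 s).const_mul _
  have := intervalIntegral.integral_eq_sub_of_hasDerivAt hderiv hint
  rw [intervalIntegral.integral_sub ((integrable_sin_pow k 0 s).const_mul _)
      ((integrable_sin_pow (k+2) 0 s).const_mul _),
    intervalIntegral.integral_const_mul, intervalIntegral.integral_const_mul] at this
  rw [Isin]
  simp only [Real.sin_zero, Real.cos_zero, zero_pow (Nat.succ_ne_zero k), zero_mul, mul_one,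
    sub_zero] at this
  linarith [this]

lemma sqrt_integral {s : ℝ} (hs : s ∈ Set.Icc 0 (π/2)) :
    ∫ t in (Real.cos s)..1, (Real.sqrt (1 - t^2))^(k+1)
      = ∫ x in (0:ℝ)..s, Real.sin x ^ (k+2) := by
  have hsle : s ≤ π := le_trans hs.2 (by linarith [Real.pi_pos])
  have h := intervalIntegral.integral_comp_smul_deriv (a := (0:ℝ)) (b := s)
    (f := Real.cos) (f' := fun x => -Real.sin x)
    (g := fun t => (Real.sqrt (1 - t^2))^(k+1))
    (fun x _ => Real.hasDerivAt_cos x)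
    ((Real.continuous_sin.neg).continuousOn)
    (by fun_prop)
  rw [Real.cos_zero] at h
  -- h : ∫ x in 0..s, (-sin x) • (g ∘ cos) x = ∫ u in 1..cos s, g u
  have hLHS : (∫ x in (0:ℝ)..s, (-Real.sin x) •
      ((fun t => (Real.sqrt (1 - t^2))^(k+1)) ∘ Real.cos) x)
      = - ∫ x in (0:ℝ)..s, Real.sin x ^ (k+2) := by
    rw [← intervalIntegral.integral_neg]
    apply intervalIntegral.integral_congr
    intro x hx
    rw [Set.uIcc_of_le hs.1] at hx
    have hsin : 0 ≤ Real.sin x := Real.sin_nonneg_of_nonneg_of_le_pi hx.1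
      (le_trans hx.2 hsle)
    have : (1 : ℝ) - Real.cos x ^2 = Real.sin x ^ 2 := by
      have := Real.sin_sq_add_cos_sq x; linarith
    simp only [Function.comp_apply, smul_eq_mul, this, Real.sqrt_sq hsin]
    ring
  rw [hLHS] at h
  have h2 : (∫ x in (1:ℝ)..(Real.cos s), (fun t => (Real.sqrt (1-t^2))^(k+1)) x)
      = - ∫ t in (Real.cos s)..1, (fun t => (Real.sqrt (1-t^2))^(k+1)) t :=
    intervalIntegral.integral_symm _ _
  rw [h2] at h
  linarith [h]

/-- Volume formula for the cone-cap, `s ∈ [0, π/2]`. -/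
lemma capCone_vol_formula {s : ℝ} (hs : s ∈ Set.Icc 0 (π/2)) :
    volume (capCone k s) =
      ENNReal.ofReal ((k+1)/(k+2) * Isin k s) * volume (Metric.ball (0:E') 1) := by
  have hsle : s ≤ π := le_trans hs.2 (by linarith [Real.pi_pos])
  have hsin : 0 ≤ Real.sin s := Real.sin_nonneg_of_nonneg_of_le_pi hs.1 hsle
  have hcos : 0 ≤ Real.cos s := Real.cos_nonneg_of_mem_Icc ⟨by linarith [hs.1], hs.2⟩
  rcases eq_or_lt_of_le hcos with hczero | hcpos
  · -- s = π/2
    have hspi : s = π/2 := by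
      rcases lt_or_eq_of_le hs.2 with h | h
      · exfalso
        have : 0 < Real.cos s := Real.cos_pos_of_mem_Ioo ⟨by linarith [hs.1, Real.pi_pos], h⟩
        rw [← hczero] at this; exact lt_irrefl _ this
      · exact h
    subst hspi
    rw [capCone_vol_of_slices (g := fun t => Real.sqrt (1 - t^2)) (by fun_prop)
      (fun t _ => Real.sqrt_nonneg _)
      (fun t ht => slice_ball_pi_div_two ht)
      (fun t ht => slice_empty hcos ht)]
    congr 2
    have h2 := sqrt_integral (k := k) (s := π/2) ⟨by linarith [Real.pi_pos], le_refl _⟩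
    rw [Real.cos_pi_div_two] at h2
    rw [h2]
    have h3 := sin_identity (k := k) (s := π/2)
    rw [Real.cos_pi_div_two, mul_zero] at h3
    have hk2 : (k:ℝ) + 2 ≠ 0 := by positivity
    field_simp
    linarith [h3]
  · -- cos s > 0
    set g : ℝ → ℝ := fun t => min (Real.sqrt (1 - t^2)) (t * Real.sin s / Real.cos s) with hg
    have hgc : Continuous g := by
      apply Continuous.min
      · fun_prop
      · fun_prop
    have hgnn : ∀ t ∈ Set.Icc (0:ℝ) 1, 0 ≤ g t := by
      intro t ht
      apply le_min (Real.sqrt_nonneg _)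
      exact div_nonneg (mul_nonneg ht.1 hsin) hcos
    rw [capCone_vol_of_slices hgc hgnn (fun t ht => slice_ball hs hcpos ht)
      (fun t ht => slice_empty hcos ht)]
    congr 2
    -- split the integral at cos s
    have hc1 : Real.cos s ≤ 1 := Real.cos_le_one s
    have hc0 : (0:ℝ) ≤ Real.cos s := hcos
    have hsplit : (∫ t in (0:ℝ)..1, (g t)^(k+1)) =
        (∫ t in (0:ℝ)..(Real.cos s), (g t)^(k+1)) +
        (∫ t in (Real.cos s)..1, (g t)^(k+1)) := by
      exact (intervalIntegral.integral_add_adjacent_intervals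
        ((hgc.pow _).intervalIntegrable _ _) ((hgc.pow _).intervalIntegrable _ _)).symm
    have hcne : Real.cos s ≠ 0 := ne_of_gt hcpos
    have hk2 : (k:ℝ) + 2 ≠ 0 := by positivity
    have hsc := Real.sin_sq_add_cos_sq s
    have heq1 : (∫ t in (0:ℝ)..(Real.cos s), (g t)^(k+1)) =
        ∫ t in (0:ℝ)..(Real.cos s), (Real.sin s / Real.cos s)^(k+1) * t^(k+1) := by
      apply intervalIntegral.integral_congr
      intro t ht
      rw [Set.uIcc_of_le hc0] at ht
      obtain ⟨ht0, htc⟩ := ht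
      have hnn : 0 ≤ t * Real.sin s / Real.cos s :=
        div_nonneg (mul_nonneg ht0 hsin) hcos
      have h1t : 0 ≤ 1 - t^2 := by nlinarith
      have hmin : g t = t * Real.sin s / Real.cos s := by
        apply min_eq_right
        rw [Real.le_sqrt hnn h1t]
        rw [div_pow, div_le_iff₀ (by positivity)]
        nlinarith
      simp only [hmin]
      rw [mul_div_assoc, mul_pow, mul_comm]
    have heq1v : (∫ t in (0:ℝ)..(Real.cos s), (g t)^(k+1)) =
        Real.sin s ^ (k+1) * Real.cos s / (k+2) := by
      rw [heq1, intervalIntegral.integral_const_mul, integral_pow]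
      have hz : (0:ℝ)^(k+1+1) = 0 := zero_pow (Nat.succ_ne_zero _)
      rw [hz, sub_zero]
      rw [div_pow]
      push_cast
      rw [show ((k:ℝ)+1+1) = (k:ℝ)+2 by ring]
      field_simp
      ring
    have heq2 : (∫ t in (Real.cos s)..1, (g t)^(k+1)) =
        ∫ x in (0:ℝ)..s, Real.sin x ^ (k+2) := by
      rw [← sqrt_integral hs]
      apply intervalIntegral.integral_congr
      intro t ht
      rw [Set.uIcc_of_le hc1] at ht
      obtain ⟨htc, ht1⟩ := ht
      have ht0 : (0:ℝ) ≤ t := le_trans hcos htc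
      have h1t : 0 ≤ 1 - t^2 := by nlinarith
      have hnn : 0 ≤ t * Real.sin s / Real.cos s :=
        div_nonneg (mul_nonneg ht0 hsin) hcos
      have hmin : g t = Real.sqrt (1 - t^2) := by
        apply min_eq_left
        apply le_of_sq_le_sq (Real.sqrt_nonneg _) hnn
        rw [Real.sq_sqrt h1t, div_pow, le_div_iff₀ (by positivity)]
        nlinarith
      simp only [hmin]
    have hident := sin_identity (k := k) (s := s)
    have hfull : ((k:ℝ)+2) * (∫ t in (0:ℝ)..1, (g t)^(k+1)) = (k+1) * Isin k s := by
      rw [hsplit, heq1v, heq2]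
      field_simp
      linarith [hident]
    rw [div_mul_eq_mul_div, eq_div_iff hk2]
    linarith [hfull]


instance : Nontrivial (EuclideanSpace ℝ (Fin (k+1))) := by
  infer_instance

lemma bcone_null {a : ℝ} (hcos : 0 ≤ Real.cos a) :
    volume {v : EuclideanSpace ℝ (Fin (k+2)) | ‖v‖ ≤ 1 ∧ ‖v‖ * Real.cos a = v 0} = 0 := by
  set Aeq : Set (ℝ × E') :=
    {p | p.1^2 + ‖p.2‖^2 ≤ 1 ∧ Real.sqrt (p.1^2 + ‖p.2‖^2) * Real.cos a = p.1} with hAeq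
  have hAm : MeasurableSet Aeq := by
    have hc : Continuous fun p : ℝ × E' => p.1^2 + ‖p.2‖^2 := by fun_prop
    apply MeasurableSet.inter
    · exact measurableSet_le hc.measurable measurable_const
    · exact measurableSet_eq_fun
        ((Real.continuous_sqrt.comp hc).mul continuous_const).measurable
        continuous_fst.measurable
  have hpre : sliceMap k ⁻¹' Aeq = {v : EuclideanSpace ℝ (Fin (k+2)) |
      ‖v‖ ≤ 1 ∧ ‖v‖ * Real.cos a = v 0} := by
    ext v
    have hns := norm_split v
    simp only [hAeq, Set.mem_preimage, Set.mem_setOf_eq, hns]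
    rw [Real.sqrt_sq (norm_nonneg v)]
    have h1 : ‖v‖^2 ≤ 1 ↔ ‖v‖ ≤ 1 := by
      constructor <;> intro h <;> nlinarith [norm_nonneg v]
    rw [h1]
    simp [sliceMap]
  rw [← hpre, sliceMap_mp.measure_preimage hAm.nullMeasurableSet,
    MeasureTheory.Measure.volume_eq_prod, Measure.prod_apply hAm]
  have hslice : ∀ t : ℝ, t ≠ 0 → volume (Prod.mk t ⁻¹' Aeq) = 0 := by
    intro t ht
    rcases eq_or_lt_of_le hcos with hc0 | hcpos
    · have : Prod.mk t ⁻¹' Aeq = ∅ := by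
        rw [Set.eq_empty_iff_forall_notMem]
        rintro w ⟨_, h2⟩
        rw [← hc0, mul_zero] at h2
        exact ht h2.symm
      rw [this, measure_empty]
    · have hsub : Prod.mk t ⁻¹' Aeq ⊆
          Metric.sphere 0 (Real.sqrt ((t^2 - t^2 * Real.cos a^2)/Real.cos a^2)) := by
        rintro w ⟨h1, h2⟩
        dsimp only at h1 h2
        have hX : (0:ℝ) ≤ t^2 + ‖w‖^2 := by positivity
        have hsqX := Real.sq_sqrt hX
        have h2sq : (Real.sqrt (t^2 + ‖w‖^2) * Real.cos a)^2 = t^2 := by rw [h2]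
        rw [mul_pow, hsqX] at h2sq
        have hw2 : ‖w‖^2 = (t^2 - t^2 * Real.cos a^2)/Real.cos a^2 := by
          field_simp
          nlinarith [h2sq]
        rw [Metric.mem_sphere, dist_zero_right, ← Real.sqrt_sq (norm_nonneg w), hw2]
      exact le_antisymm (le_trans (measure_mono hsub)
        (le_of_eq (Measure.addHaar_sphere volume _ _))) (zero_le)
  have hae : (fun t => volume (Prod.mk t ⁻¹' Aeq)) =ᵐ[volume] 0 := by
    filter_upwards [compl_mem_ae_iff.mpr (measure_singleton (0:ℝ))] with t ht
    exact hslice t ht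
  rw [lintegral_congr_ae hae]
  simp

lemma capCone_subset_ball (s : ℝ) : capCone k s ⊆ Metric.closedBall (0:E) 1 := by
  intro v hv
  rw [Metric.mem_closedBall, dist_zero_right]
  exact hv.1

lemma strict_measurable (a : ℝ) :
    MeasurableSet {v : EuclideanSpace ℝ (Fin (k+2)) | ‖v‖ ≤ 1 ∧ ‖v‖ * Real.cos a < v 0} := by
  apply MeasurableSet.inter
  · exact measurableSet_le continuous_norm.measurable measurable_const
  · apply measurableSet_lt (f := fun v : EuclideanSpace ℝ (Fin (k+2)) => ‖v‖ * Real.cos a)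
    · exact (continuous_norm.mul continuous_const).measurable
    · exact (EuclideanSpace.proj (0 : Fin (k+2)) : EuclideanSpace ℝ (Fin (k+2)) →L[ℝ] ℝ).continuous.measurable

lemma capCone_compl {s : ℝ} (hs : s ∈ Set.Icc (π/2) π) :
    volume (capCone k s) =
      volume (Metric.closedBall (0:E) 1) - volume (capCone k (π - s)) := by
  set a := π - s with ha
  obtain ⟨hs1, hs2⟩ := hs
  have hacos : 0 ≤ Real.cos a := by
    apply Real.cos_nonneg_of_mem_Icc
    constructor
    · rw [ha]; linarith [Real.pi_pos]
    · rw [ha]; linarith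
  set strict : Set (EuclideanSpace ℝ (Fin (k+2))) :=
    {v | ‖v‖ ≤ 1 ∧ ‖v‖ * Real.cos a < v 0} with hstrict
  have hset : capCone k s = Metric.closedBall (0:E) 1 \ (Neg.neg ⁻¹' strict) := by
    ext v
    simp only [capCone, hstrict, Set.mem_diff, Set.mem_preimage, Set.mem_setOf_eq,
      Metric.mem_closedBall, dist_zero_right, norm_neg]
    have hneg : (-v) 0 = -(v 0) := rfl
    rw [hneg]
    have hcc : Real.cos a = - Real.cos s := by rw [ha, Real.cos_pi_sub]
    rw [hcc]
    constructor
    · rintro ⟨h1, h2⟩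
      exact ⟨h1, fun hh => absurd hh.2 (by linarith)⟩
    · rintro ⟨h1, h2⟩
      refine ⟨h1, ?_⟩
      by_contra hcon
      exact h2 ⟨h1, by linarith⟩
  have hsub : Neg.neg ⁻¹' strict ⊆ Metric.closedBall (0:E) 1 := by
    intro v hv
    rw [Metric.mem_closedBall, dist_zero_right]
    have := hv.1
    rwa [norm_neg] at this
  have hmeas : MeasurableSet (Neg.neg ⁻¹' strict) :=
    (strict_measurable a).preimage measurable_neg
  have hfin : volume (Neg.neg ⁻¹' strict) ≠ ⊤ :=
    (lt_of_le_of_lt (measure_mono hsub) measure_closedBall_lt_top).ne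
  rw [hset, measure_diff hsub hmeas.nullMeasurableSet hfin]
  congr 1
  rw [Measure.measure_preimage_neg]
  apply le_antisymm
  · calc volume strict ≤ volume (capCone k a) :=
        measure_mono (fun v hv => ⟨hv.1, le_of_lt hv.2⟩)
      _ = volume (capCone k a) := rfl
  · calc volume (capCone k a)
        ≤ volume (strict ∪ {v : EuclideanSpace ℝ (Fin (k+2)) |
            ‖v‖ ≤ 1 ∧ ‖v‖ * Real.cos a = v 0}) := by
          apply measure_mono
          rintro v ⟨h1, h2⟩
          rcases lt_or_eq_of_le h2 with h | h
          · exact Or.inl ⟨h1, h⟩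
          · exact Or.inr ⟨h1, h⟩
      _ ≤ volume strict + volume {v : EuclideanSpace ℝ (Fin (k+2)) |
            ‖v‖ ≤ 1 ∧ ‖v‖ * Real.cos a = v 0} := measure_union_le _ _
      _ = volume strict := by rw [bcone_null hacos, add_zero]

lemma ball_eq_two_caps :
    volume (Metric.closedBall (0:E) 1) =
      volume (capCone k (π/2)) + volume (capCone k (π/2)) := by
  have h := capCone_compl (k := k) (s := π/2)
    ⟨le_refl _, by linarith [Real.pi_pos]⟩
  rw [show π - π/2 = π/2 by ring] at h
  have hle : volume (capCone k (π/2)) ≤ volume (Metric.closedBall (0:E) 1) :=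
    measure_mono (capCone_subset_ball _)
  calc volume (Metric.closedBall (0:E) 1)
      = volume (Metric.closedBall (0:E) 1) - volume (capCone k (π/2)) +
        volume (capCone k (π/2)) := (tsub_add_cancel_of_le hle).symm
    _ = volume (capCone k (π/2)) + volume (capCone k (π/2)) := by rw [← h]

lemma Isin_nonneg {s : ℝ} (h0 : 0 ≤ s) (hπ : s ≤ π) : 0 ≤ Isin k s := by
  apply intervalIntegral.integral_nonneg h0
  intro x hx
  exact pow_nonneg (Real.sin_nonneg_of_nonneg_of_le_pi hx.1 (le_trans hx.2 hπ)) _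

lemma Isin_mono {a b : ℝ} (h0 : 0 ≤ a) (hab : a ≤ b) (hπ : b ≤ π) :
    Isin k a ≤ Isin k b := by
  have hsplit : Isin k b = Isin k a + ∫ x in a..b, Real.sin x ^ k := by
    rw [Isin, Isin, intervalIntegral.integral_add_adjacent_intervals
      (integrable_sin_pow k 0 a) (integrable_sin_pow k a b)]
  rw [hsplit]
  have : 0 ≤ ∫ x in a..b, Real.sin x ^ k := by
    apply intervalIntegral.integral_nonneg hab
    intro x hx
    exact pow_nonneg (Real.sin_nonneg_of_nonneg_of_le_pi (le_trans h0 hx.1)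
      (le_trans hx.2 hπ)) _
  linarith

lemma Isin_doubling {r : ℝ} (h0 : 0 ≤ r) (h : r ≤ π/2) :
    Isin k (2*r) ≤ 2^(k+1) * Isin k r := by
  have hsub : Isin k (2*r) = 2 * ∫ x in (0:ℝ)..r, Real.sin (2*x) ^ k := by
    have := intervalIntegral.integral_comp_mul_left
      (f := fun x => Real.sin x ^ k) (a := (0:ℝ)) (b := r) (c := (2:ℝ)) two_ne_zero
    rw [mul_zero] at this
    rw [Isin, this, smul_eq_mul]
    ring
  have hmono : (∫ x in (0:ℝ)..r, Real.sin (2*x) ^ k) ≤ ∫ x in (0:ℝ)..r, 2^k * Real.sin x ^ k := by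
    apply intervalIntegral.integral_mono_on h0
    · exact ((Real.continuous_sin.comp (continuous_const.mul continuous_id)).pow
        k).intervalIntegrable _ _
    · exact (integrable_sin_pow k 0 r).const_mul _
    · intro x hx
      have hx0 := hx.1
      have hxπ : x ≤ π/2 := le_trans hx.2 h
      have hsin2 : Real.sin (2*x) ≤ 2 * Real.sin x := by
        rw [Real.sin_two_mul]
        have hs : 0 ≤ Real.sin x := Real.sin_nonneg_of_nonneg_of_le_pi hx0
          (by linarith [Real.pi_pos])
        nlinarith [Real.cos_le_one x]
      have hsin2nn : 0 ≤ Real.sin (2*x) := by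
        apply Real.sin_nonneg_of_nonneg_of_le_pi (by linarith)
        linarith
      calc Real.sin (2*x) ^ k ≤ (2 * Real.sin x) ^ k := pow_le_pow_left₀ hsin2nn hsin2 k
        _ = 2^k * Real.sin x ^ k := mul_pow _ _ _
  have hmono' : (∫ x in (0:ℝ)..r, Real.sin (2*x) ^ k) ≤ 2^k * Isin k r := by
    have h2 := hmono
    rw [intervalIntegral.integral_const_mul] at h2
    exact h2
  rw [hsub, pow_succ]
  nlinarith [hmono']

lemma Isin_symm {a : ℝ} (h0 : 0 ≤ a) (hπ : a ≤ π) :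
    Isin k π = Isin k (π - a) + Isin k a := by
  have hcs := intervalIntegral.integral_comp_sub_left
    (f := fun x => Real.sin x ^ k) (a := (0:ℝ)) (b := a) π
  rw [sub_zero] at hcs
  have hL : (∫ x in (0:ℝ)..a, Real.sin (π - x) ^ k) = Isin k a := by
    rw [Isin]
    apply intervalIntegral.integral_congr
    intro x _
    simp only [Real.sin_pi_sub]
  rw [hL] at hcs
  have hsplit : Isin k π = Isin k (π - a) + ∫ x in (π - a)..π, Real.sin x ^ k := by
    rw [Isin, Isin, intervalIntegral.integral_add_adjacent_intervals
      (integrable_sin_pow k 0 (π - a)) (integrable_sin_pow k (π - a) π)]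
  rw [hsplit, ← hcs]


lemma two_le_pow_ennreal : (2 : ENNReal) ≤ 2^(k+1) := by
  calc (2 : ENNReal) = 2^1 := (pow_one 2).symm
    _ ≤ 2^(k+1) := pow_le_pow_right₀ one_le_two (by omega)

lemma ofReal_two_pow : (2 : ENNReal)^(k+1) = ENNReal.ofReal (2^(k+1)) := by
  rw [ENNReal.ofReal_pow (by norm_num)]
  norm_num

/-- Main volume inequality: doubling the cap radius multiplies volume by at most 2^(k+1). -/
lemma vol_doubling {r : ℝ} (hr0 : 0 < r) (hrπ : r < π) :
    volume (capCone k (min (2*r) π)) ≤ 2^(k+1) * volume (capCone k r) := by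
  have hπ := Real.pi_pos
  have hc : (0:ℝ) ≤ (k+1)/(k+2) := by positivity
  rcases le_or_gt (π/2) r with hA | hB
  · -- r ≥ π/2 : cap of radius min(2r,π) = π is the whole ball
    have hmin : min (2*r) π = π := min_eq_right (by linarith)
    rw [hmin, capCone_pi, ball_eq_two_caps]
    have hmono : volume (capCone k (π/2)) ≤ volume (capCone k r) :=
      measure_mono (capCone_mono (by linarith) hA (le_of_lt hrπ))
    calc volume (capCone k (π/2)) + volume (capCone k (π/2))
        ≤ volume (capCone k r) + volume (capCone k r) := add_le_add hmono hmono
      _ = 2 * volume (capCone k r) := (two_mul _).symm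
      _ ≤ 2^(k+1) * volume (capCone k r) := mul_le_mul_left two_le_pow_ennreal _
  · rcases le_or_gt (2*r) (π/2) with hB2 | hB3
    · -- 2r ≤ π/2
      have hmin : min (2*r) π = 2*r := min_eq_left (by linarith)
      rw [hmin, capCone_vol_formula ⟨by linarith, hB2⟩,
        capCone_vol_formula ⟨le_of_lt hr0, le_of_lt hB⟩, ← mul_assoc]
      apply mul_le_mul_left
      rw [ofReal_two_pow, ← ENNReal.ofReal_mul (by positivity)]
      apply ENNReal.ofReal_le_ofReal
      have hd := Isin_doubling (k := k) (le_of_lt hr0) (le_of_lt hB)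
      have hnn : 0 ≤ Isin k r := Isin_nonneg (le_of_lt hr0) (by linarith)
      calc (k+1)/(k+2) * Isin k (2*r) ≤ (k+1)/(k+2) * (2^(k+1) * Isin k r) :=
            mul_le_mul_of_nonneg_left hd hc
        _ = 2^(k+1) * ((k+1)/(k+2) * Isin k r) := by ring
    · -- π/2 < 2r < π
      have hmin : min (2*r) π = 2*r := min_eq_left (by linarith)
      rw [hmin, capCone_compl ⟨le_of_lt hB3, by linarith⟩]
      rw [tsub_le_iff_right, ball_eq_two_caps,
        capCone_vol_formula (k := k) (s := π/2) ⟨by linarith, le_refl _⟩,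
        capCone_vol_formula (k := k) (s := r) ⟨le_of_lt hr0, le_of_lt hB⟩,
        capCone_vol_formula (k := k) (s := π - 2*r) ⟨by linarith, by linarith⟩]
      have h2 : (0:ℝ) ≤ π/2 := by linarith
      have hI2 : 0 ≤ Isin k (π/2) := Isin_nonneg h2 (by linarith)
      have hIr : 0 ≤ Isin k r := Isin_nonneg (le_of_lt hr0) (by linarith)
      have hIp : 0 ≤ Isin k (π - 2*r) := Isin_nonneg (by linarith) (by linarith)
      have hIπ : Isin k π = Isin k (π/2) + Isin k (π/2) := by
        have := Isin_symm (k := k) (a := π/2) h2 (by linarith)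
        rw [show π - π/2 = π/2 by ring] at this
        exact this
      have hIsym : Isin k π = Isin k (π - 2*r) + Isin k (2*r) :=
        Isin_symm (by linarith) (by linarith)
      have hd := Isin_doubling (k := k) (le_of_lt hr0) (le_of_lt hB)
      have hkey : (k+1)/(k+2) * Isin k (π/2) + (k+1)/(k+2) * Isin k (π/2)
          ≤ 2^(k+1) * ((k+1)/(k+2) * Isin k r) + (k+1)/(k+2) * Isin k (π - 2*r) := by
        have h1 : Isin k (π/2) + Isin k (π/2) ≤ 2^(k+1) * Isin k r + Isin k (π - 2*r) := by
          rw [← hIπ, hIsym]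
          linarith [hd]
        nlinarith [h1, hc]
      calc ENNReal.ofReal ((k+1)/(k+2) * Isin k (π/2)) * volume (Metric.ball (0:E') 1)
            + ENNReal.ofReal ((k+1)/(k+2) * Isin k (π/2)) * volume (Metric.ball (0:E') 1)
          = ENNReal.ofReal ((k+1)/(k+2) * Isin k (π/2) + (k+1)/(k+2) * Isin k (π/2)) *
              volume (Metric.ball (0:E') 1) := by
            rw [ENNReal.ofReal_add (by positivity) (by positivity), add_mul]
        _ ≤ ENNReal.ofReal (2^(k+1) * ((k+1)/(k+2) * Isin k r)
              + (k+1)/(k+2) * Isin k (π - 2*r)) * volume (Metric.ball (0:E') 1) := by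
            apply mul_le_mul_left
            exact ENNReal.ofReal_le_ofReal hkey
        _ = (ENNReal.ofReal (2^(k+1) * ((k+1)/(k+2) * Isin k r))
              + ENNReal.ofReal ((k+1)/(k+2) * Isin k (π - 2*r))) *
              volume (Metric.ball (0:E') 1) := by
            rw [ENNReal.ofReal_add (by positivity) (by positivity)]
        _ = 2^(k+1) * (ENNReal.ofReal ((k+1)/(k+2) * Isin k r) *
              volume (Metric.ball (0:E') 1))
            + ENNReal.ofReal ((k+1)/(k+2) * Isin k (π - 2*r)) *
              volume (Metric.ball (0:E') 1) := by
            rw [ENNReal.ofReal_mul (by positivity), ← ofReal_two_pow, add_mul, mul_assoc]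


lemma mem_cap_iff {d : ℕ} (x y : Sph d) {s : ℝ} (hs0 : 0 ≤ s) (hsπ : s ≤ π) :
    y ∈ geodesicCap s x ↔ Real.cos s ≤ ⟪(x : EuclideanSpace ℝ (Fin d)),
      (y : EuclideanSpace ℝ (Fin d))⟫_ℝ := by
  have hmem := inner_mem_Icc (sphere_norm_one x) (sphere_norm_one y)
  constructor
  · intro h
    have := Real.cos_le_cos_of_nonneg_of_le_pi (Real.arccos_nonneg _) hsπ h
    rwa [Real.cos_arccos hmem.1 hmem.2] at this
  · exact fun h => arccos_le_of_cos_le hmem.1 hmem.2 hs0 h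

noncomputable def basePt (k : ℕ) : Sph (k+2) :=
  ⟨e₀, by rw [mem_sphere_zero_iff_norm]; exact norm_e₀⟩

lemma sigma0_cap {s : ℝ} (hs0 : 0 ≤ s) (hsπ : s ≤ π) :
    sigma0 k (geodesicCap s (basePt k)) =
      (volume (Metric.closedBall (0 : E) 1))⁻¹ * volume (capCone k s) := by
  rw [sigma0, Measure.smul_apply, Measure.map_apply measurable_nmap (measurableSet_cap _ _),
    ballMeasure, Measure.restrict_apply' Metric.isClosed_closedBall.measurableSet, smul_eq_mul]
  congr 1
  congr 1
  ext v
  simp only [Set.mem_inter_iff, Set.mem_preimage, Metric.mem_closedBall, dist_zero_right]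
  rw [mem_cap_iff _ _ hs0 hsπ]
  by_cases hv : v = 0
  · subst hv
    simp only [capCone, Set.mem_setOf_eq, norm_zero, zero_mul]
    have h0 : ((0 : E) 0) = 0 := rfl
    have hval : ((nmap k (0:E)) : E) = e₀ := by
      simp [nmap]
    rw [hval, h0]
    have hip : ⟪(basePt k : E), e₀⟫_ℝ = 1 := by
      have := real_inner_self_eq_norm_sq (e₀ : E)
      rw [norm_e₀] at this
      simpa [basePt] using this
    rw [hip]
    simp [Real.cos_le_one s]
  · have hnv : 0 < ‖v‖ := norm_pos_iff.mpr hv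
    have hval : ((nmap k v) : E) = ‖v‖⁻¹ • v := by simp [nmap, hv]
    rw [hval]
    have hip : ⟪(basePt k : E), ‖v‖⁻¹ • v⟫_ℝ = ‖v‖⁻¹ * (v 0) := by
      rw [real_inner_smul_right]
      congr 1
      show ⟪(EuclideanSpace.single 0 1 : E), v⟫_ℝ = v 0
      rw [EuclideanSpace.inner_single_left]
      simp
    rw [hip]
    simp only [capCone, Set.mem_setOf_eq]
    constructor
    · rintro ⟨h1, h2⟩
      refine ⟨h2, ?_⟩
      have := mul_le_mul_of_nonneg_left h1 (le_of_lt hnv)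
      rwa [← mul_assoc, mul_inv_cancel₀ (ne_of_gt hnv), one_mul] at this
    · rintro ⟨h1, h2⟩
      refine ⟨?_, h1⟩
      rw [show ‖v‖⁻¹ * (v 0) = (v 0) / ‖v‖ by ring, le_div_iff₀ hnv]
      rwa [mul_comm] at h2

end CapProof

theorem caps_intersection_probability_le {d : ℕ} (hd : 2 ≤ d) (N : ℕ) (hN : 2 ≤ N)
    (σ : Measure (Metric.sphere (0 : EuclideanSpace ℝ (Fin d)) 1)) [IsProbabilityMeasure σ]
    -- σ is the uniform distribution: it is invariant under all ambient linear isometries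
    (hσinv : ∀ f : EuclideanSpace ℝ (Fin d) ≃ₗᵢ[ℝ] EuclideanSpace ℝ (Fin d),
      Measure.map (sphereMap f) σ = σ)
    (rN : ℝ) (hrN : rN ∈ Set.Ioo 0 π)
    -- every cap of radius rN has normalized surface measure 1/N
    (hcap : ∀ x, σ (geodesicCap rN x) = 1 / N)
    {Ω : Type*} [MeasurableSpace Ω] (P : Measure Ω) [IsProbabilityMeasure P]
    (U₁ U₂ : Ω → Metric.sphere (0 : EuclideanSpace ℝ (Fin d)) 1)
    (hU₁ : Measurable U₁) (hU₂ : Measurable U₂)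
    (hindep : IndepFun U₁ U₂ P)
    (hdist₁ : Measure.map U₁ P = σ) (hdist₂ : Measure.map U₂ P = σ) :
    P {ω | (geodesicCap rN (U₁ ω) ∩ geodesicCap rN (U₂ ω)).Nonempty} ≤ 2 ^ (d - 1) / N := by
  open CapProof in
  obtain ⟨k, rfl⟩ : ∃ k, d = k + 2 := ⟨d - 2, by omega⟩
  obtain ⟨hr0, hrπ⟩ := hrN
  set s' := min (2*rN) π with hs'
  have hπ := Real.pi_pos
  have hs'0 : 0 ≤ s' := le_min (by linarith) (by linarith)
  have hs'π : s' ≤ π := min_le_right _ _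
  -- step 1: event inclusion
  have hincl : {ω | (geodesicCap rN (U₁ ω) ∩ geodesicCap rN (U₂ ω)).Nonempty} ⊆
      {ω | U₂ ω ∈ geodesicCap s' (U₁ ω)} := by
    rintro ω ⟨z, hz1, hz2⟩
    have h1 : Real.arccos ⟪(U₁ ω : EuclideanSpace ℝ (Fin (k+2))),
        (z : EuclideanSpace ℝ (Fin (k+2)))⟫_ℝ ≤ rN := hz1
    have h2 : Real.arccos ⟪(U₂ ω : EuclideanSpace ℝ (Fin (k+2))),
        (z : EuclideanSpace ℝ (Fin (k+2)))⟫_ℝ ≤ rN := hz2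
    show Real.arccos ⟪(U₁ ω : EuclideanSpace ℝ (Fin (k+2))),
        (U₂ ω : EuclideanSpace ℝ (Fin (k+2)))⟫_ℝ ≤ s'
    apply le_min _ (Real.arccos_le_pi _)
    calc Real.arccos ⟪(U₁ ω : EuclideanSpace ℝ (Fin (k+2))),
          (U₂ ω : EuclideanSpace ℝ (Fin (k+2)))⟫_ℝ
        ≤ Real.arccos ⟪(U₁ ω : EuclideanSpace ℝ (Fin (k+2))),
            (z : EuclideanSpace ℝ (Fin (k+2)))⟫_ℝ +
          Real.arccos ⟪(z : EuclideanSpace ℝ (Fin (k+2))),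
            (U₂ ω : EuclideanSpace ℝ (Fin (k+2)))⟫_ℝ :=
          arccos_inner_triangle (sphere_norm_one _) (sphere_norm_one _) (sphere_norm_one _)
      _ ≤ rN + rN := by
          apply add_le_add h1
          rwa [real_inner_comm]
      _ = 2 * rN := by ring
  -- step 2: independence
  have hTmeas := measurableSet_capRel (d := k+2) s'
  have hmap : Measure.map (fun ω => (U₁ ω, U₂ ω)) P = σ.prod σ := by
    have h := (indepFun_iff_map_prod_eq_prod_map_map hU₁.aemeasurable
      hU₂.aemeasurable).mp hindep
    rw [hdist₁, hdist₂] at h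
    exact h
  have hPe : P {ω | U₂ ω ∈ geodesicCap s' (U₁ ω)} =
      (σ.prod σ) {p : Sph (k+2) × Sph (k+2) | p.2 ∈ geodesicCap s' p.1} := by
    rw [← hmap, Measure.map_apply (hU₁.prodMk hU₂) hTmeas]
    rfl
  have hprod : (σ.prod σ) {p : Sph (k+2) × Sph (k+2) | p.2 ∈ geodesicCap s' p.1}
      = σ (geodesicCap s' (basePt k)) := by
    rw [Measure.prod_apply hTmeas]
    have : ∀ z : Sph (k+2), σ (Prod.mk z ⁻¹'
        {p : Sph (k+2) × Sph (k+2) | p.2 ∈ geodesicCap s' p.1}) =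
        σ (geodesicCap s' (basePt k)) := fun z => cap_const σ hσinv s' z (basePt k)
    rw [lintegral_congr this, lintegral_const, measure_univ, mul_one]
  have huniq : ∀ (s : ℝ) (x : Sph (k+2)), σ (geodesicCap s x) = sigma0 k (geodesicCap s x) :=
    fun s x => cap_unique σ (sigma0 k) hσinv sigma0_invariant s x
  have hBne : (volume (Metric.closedBall (0 : EuclideanSpace ℝ (Fin (k+2))) 1)) ≠ 0 :=
    ballVol_ne_zero
  -- chain
  calc P {ω | (geodesicCap rN (U₁ ω) ∩ geodesicCap rN (U₂ ω)).Nonempty}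
      ≤ P {ω | U₂ ω ∈ geodesicCap s' (U₁ ω)} := measure_mono hincl
    _ = σ (geodesicCap s' (basePt k)) := by rw [hPe, hprod]
    _ = sigma0 k (geodesicCap s' (basePt k)) := huniq s' (basePt k)
    _ = (volume (Metric.closedBall (0 : EuclideanSpace ℝ (Fin (k+2))) 1))⁻¹ *
          volume (capCone k s') := sigma0_cap hs'0 hs'π
    _ ≤ (volume (Metric.closedBall (0 : EuclideanSpace ℝ (Fin (k+2))) 1))⁻¹ *
          (2^(k+1) * volume (capCone k rN)) :=
        mul_le_mul_right (vol_doubling hr0 hrπ) _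
    _ = 2^(k+1) * ((volume (Metric.closedBall (0 : EuclideanSpace ℝ (Fin (k+2))) 1))⁻¹ *
          volume (capCone k rN)) := by ring
    _ = 2^(k+1) * sigma0 k (geodesicCap rN (basePt k)) := by
        rw [sigma0_cap (le_of_lt hr0) (le_of_lt hrπ)]
    _ = 2^(k+1) * σ (geodesicCap rN (basePt k)) := by rw [huniq]
    _ = 2^(k+1) * (1 / N) := by rw [hcap (basePt k)]
    _ = 2^(k+2-1) / N := by
        rw [mul_one_div]
        norm_num
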